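/- Let k ≥ 1, ρ > 0, and set κ = −1/ρ². Let μ, ν be real numbers with μ ≤ −κk²/4 = k²/(4ρ²), ν ≤ k²/(4ρ²), and μ ≠ ν. Suppose φ_μ, φ_ν : [0, ∞) → ℂ are continuous on [0, ∞), twice differentiable on (0, ∞), satisfy φ_μ''(r) + (k/ρ)·coth(r/ρ)·φ_μ'(r) + μ·φ_μ(r) = 0 and φ_ν''(r) + (k/ρ)·coth(r/ρ)·φ_ν'(r) + ν·φ_ν(r) = 0 for all r > 0, and φ_μ(0) = φ_ν(0) = 1. Then φ_μ(r) ≠ φ_ν(r) for every r ∈ (0, ∞). Consequently, if two such eigenfunctions with real eigenvalues at most k²/(4ρ²) agree at a single point r₀ > 0, then μ = ν and φ_μ ≡ φ_ν. -/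

import Mathlib

open MeasureTheory Set Filter intervalIntegral

lemma OR_sinh_le {c x : ℝ} (hx : 0 ≤ x) (hxc : x ≤ c) : Real.sinh x ≤ x * Real.cosh c := by
  have hmono : MonotoneOn (fun y => y * Real.cosh c - Real.sinh y) (Icc 0 c) := by
    apply monotoneOn_of_deriv_nonneg (convex_Icc 0 c)
    · fun_prop
    · intro y hy
      exact ((differentiable_id.mul_const _).sub Real.differentiable_sinh).differentiableAt.differentiableWithinAt
    · intro y hy
      rw [interior_Icc] at hy
      have : deriv (fun y => y * Real.cosh c - Real.sinh y) y = Real.cosh c - Real.cosh y := by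
        rw [deriv_fun_sub (f := fun y => y * Real.cosh c) (by fun_prop) Real.differentiable_sinh.differentiableAt, Real.deriv_sinh]
        simp
      rw [this]
      have : Real.cosh y ≤ Real.cosh c := by
        rw [Real.cosh_le_cosh]
        rw [abs_of_nonneg hy.1.le, abs_of_nonneg (hy.1.le.trans hy.2.le)]
        exact hy.2.le
      linarith
  have h := hmono (left_mem_Icc.2 (hx.trans hxc)) ⟨hx, hxc⟩ hx
  simpa using h

lemma OR_P_hasDeriv (k : ℕ) (ρ : ℝ) (hρ : 0 < ρ) (r : ℝ) :
    HasDerivAt (fun s => Real.sinh (s/ρ) ^ k)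
      ((k : ℝ) * Real.sinh (r/ρ) ^ (k-1) * Real.cosh (r/ρ) / ρ) r := by
  have h1 : HasDerivAt (fun s : ℝ => s/ρ) (1/ρ) r := by
    simpa using (hasDerivAt_id r).div_const ρ
  have h3 : HasDerivAt (fun s : ℝ => Real.sinh (s/ρ)) (Real.cosh (r/ρ) * (1/ρ)) r :=
    (Real.hasDerivAt_sinh (r/ρ)).comp (h₂ := Real.sinh) r h1
  have h4 := h3.pow k
  refine HasDerivAt.congr_deriv h4 (Eq.symm ?_)
  ring
lemma OR_Pderiv_hasDeriv (k : ℕ) (hk : 1 ≤ k) (ρ : ℝ) (hρ : 0 < ρ) (lam : ℝ) (g : ℝ → ℝ)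
    (hdiff : ∀ r : ℝ, 0 < r → DifferentiableAt ℝ g r ∧ DifferentiableAt ℝ (deriv g) r)
    (heq : ∀ r : ℝ, 0 < r → deriv (deriv g) r
      + (k/ρ) * (Real.cosh (r/ρ)/Real.sinh (r/ρ)) * deriv g r + lam * g r = 0)
    (r : ℝ) (hr : 0 < r) :
    HasDerivAt (fun s => Real.sinh (s/ρ) ^ k * deriv g s)
      (-lam * (Real.sinh (r/ρ) ^ k * g r)) r := by
  have hS : 0 < Real.sinh (r/ρ) := Real.sinh_pos_iff.2 (div_pos hr hρ)
  have hprod := (OR_P_hasDeriv k ρ hρ r).mul ((hdiff r hr).2.hasDerivAt)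
  refine HasDerivAt.congr_deriv hprod (Eq.symm ?_)
  have h5 : deriv (deriv g) r = -((k/ρ) * (Real.cosh (r/ρ)/Real.sinh (r/ρ)) * deriv g r)
      - lam * g r := by linarith [heq r hr]
  rw [h5]
  have hpow : Real.sinh (r/ρ) ^ k = Real.sinh (r/ρ) ^ (k-1) * Real.sinh (r/ρ) := by
    rw [← pow_succ]; congr 1; omega
  rw [hpow]
  field_simp
  ring

lemma OR_neg_of_deriv_neg {b : ℝ} (hb : 0 < b) {Z Z' : ℝ → ℝ}
    (hZ : ∀ r ∈ Ioc (0:ℝ) b, HasDerivAt Z (Z' r) r)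
    (hZ' : ∀ r ∈ Ioo (0:ℝ) b, Z' r < 0)
    (h0 : Tendsto Z (nhdsWithin 0 (Ioi 0)) (nhds 0)) : Z b < 0 := by
  have hanti : ∀ x ∈ Ioc (0:ℝ) b, StrictAntiOn Z (Icc x b) := by
    intro x hx
    apply strictAntiOn_of_deriv_neg (convex_Icc x b)
    · intro y hy
      exact (hZ y ⟨lt_of_lt_of_le hx.1 hy.1, hy.2⟩).continuousAt.continuousWithinAt
    · intro y hy
      rw [interior_Icc] at hy
      rw [(hZ y ⟨hx.1.trans hy.1, hy.2.le⟩).deriv]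
      exact hZ' y ⟨hx.1.trans hy.1, hy.2⟩
  have hs : (0:ℝ) < b/2 := by linarith
  have hsb : b/2 < b := by linarith
  have h1 : Z b < Z (b/2) :=
    hanti (b/2) ⟨hs, hsb.le⟩ (left_mem_Icc.2 hsb.le) (right_mem_Icc.2 hsb.le) hsb
  have h2 : Z (b/2) ≤ 0 := by
    apply ge_of_tendsto h0
    filter_upwards [Ioo_mem_nhdsGT_of_mem (left_mem_Ico.2 hs)] with x hx
    exact (hanti x ⟨hx.1, hx.2.le.trans hsb.le⟩ (left_mem_Icc.2 (by linarith [hx.2])) 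
      ⟨hx.2.le, hsb.le⟩ hx.2).le
  linarith

lemma OR_tendsto (k : ℕ) (hk : 1 ≤ k) (ρ : ℝ) (hρ : 0 < ρ) (lam : ℝ) (g : ℝ → ℝ)
    (hcont : ContinuousOn g (Set.Ici 0))
    (hdiff : ∀ r : ℝ, 0 < r → DifferentiableAt ℝ g r ∧ DifferentiableAt ℝ (deriv g) r)
    (heq : ∀ r : ℝ, 0 < r → deriv (deriv g) r
      + (k/ρ) * (Real.cosh (r/ρ)/Real.sinh (r/ρ)) * deriv g r + lam * g r = 0) :
    Tendsto (fun s => Real.sinh (s/ρ) ^ k * deriv g s) (nhdsWithin 0 (Ioi 0)) (nhds 0) := by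
  set P : ℝ → ℝ := fun s => Real.sinh (s/ρ) ^ k with hPdef
  have hPcont : Continuous P := by fun_prop
  have hPpos : ∀ s : ℝ, 0 < s → 0 < P s := fun s hs =>
    pow_pos (Real.sinh_pos_iff.2 (div_pos hs hρ)) k
  have hPgcont : ContinuousOn (fun t => P t * g t) (Ici 0) :=
    hPcont.continuousOn.mul hcont
  have hPg_int : ∀ a b : ℝ, 0 ≤ a → 0 ≤ b → IntervalIntegrable (fun t => P t * g t)
      MeasureTheory.volume a b := by
    intro a b ha hb
    apply (hPgcont.mono _).intervalIntegrable
    intro x hx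
    rcases mem_uIcc.mp hx with h | h
    · exact le_trans ha h.1
    · exact le_trans hb h.1
  -- derivative continuity
  have hdgcont : ContinuousOn (deriv g) (Ioi 0) := fun x hx =>
    ((hdiff x hx).2.continuousAt).continuousWithinAt
  set F : ℝ → ℝ := fun x => ∫ t in (0:ℝ)..x, P t * g t with hFdef
  set L : ℝ := P 1 * deriv g 1 + lam * F 1 with hLdef
  -- the key identity
  have hkey : ∀ s : ℝ, 0 < s → s ≤ 1 → P s * deriv g s = L - lam * F s := by
    intro s hs hs1
    have hftc := integral_eq_sub_of_hasDerivAt (a := s) (b := 1)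
        (f := fun u => P u * deriv g u) (f' := fun x => -lam * (P x * g x)) ?_ ?_
    rotate_left
    · intro x hx
      rw [uIcc_of_le hs1] at hx
      exact OR_Pderiv_hasDeriv k hk ρ hρ lam g hdiff heq x (lt_of_lt_of_le hs hx.1)
    · apply ContinuousOn.intervalIntegrable
      apply (continuous_const.continuousOn.mul (hPgcont.mono _))
      rw [uIcc_of_le hs1]
      exact fun x hx => le_trans hs.le hx.1
    have hadd : F s + ∫ t in s..(1:ℝ), P t * g t = F 1 :=
      integral_add_adjacent_intervals (hPg_int 0 s le_rfl hs.le)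
        (hPg_int s 1 hs.le zero_le_one)
    rw [intervalIntegral.integral_const_mul] at hftc
    have : ∫ t in s..(1:ℝ), P t * g t = F 1 - F s := by linarith
    rw [this] at hftc
    rw [hLdef]
    linarith
  -- bound for F near 0
  obtain ⟨C₀, hC₀⟩ := (isCompact_Icc (a := (0:ℝ)) (b := 1)).exists_bound_of_continuousOn
      (hPgcont.mono Icc_subset_Ici_self)
  set C : ℝ := max C₀ 0 with hCdef
  have hC : ∀ t ∈ Icc (0:ℝ) 1, |P t * g t| ≤ C := fun t ht =>
    le_trans (by simpa only [Real.norm_eq_abs] using hC₀ t ht) (le_max_left _ _)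
  have hCnonneg : 0 ≤ C := le_max_right _ _
  have hFbound : ∀ s : ℝ, 0 < s → s ≤ 1 → |F s| ≤ C * s := by
    intro s hs hs1
    have := intervalIntegral.norm_integral_le_of_norm_le_const (C := C)
      (f := fun t => P t * g t) (a := 0) (b := s) ?_
    · simpa [abs_of_pos hs, Real.norm_eq_abs] using this
    · intro x hx
      rw [uIoc_of_le hs.le] at hx
      exact hC x ⟨hx.1.le, hx.2.trans hs1⟩
  have hFtend : Tendsto F (nhdsWithin 0 (Ioi 0)) (nhds 0) := by
    apply squeeze_zero_norm'
    · filter_upwards [Ioc_mem_nhdsGT_of_mem (by simp : (0:ℝ) ∈ Ico (0:ℝ) 1)] with s hs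
      simpa [Real.norm_eq_abs] using hFbound s hs.1 hs.2
    · have : Tendsto (fun s : ℝ => C * s) (nhds 0) (nhds (C * 0)) :=
        (continuous_const.mul continuous_id).tendsto 0
      simpa using this.mono_left nhdsWithin_le_nhds
  have hTend : Tendsto (fun s => P s * deriv g s) (nhdsWithin 0 (Ioi 0)) (nhds L) := by
    have h1 : Tendsto (fun s => L - lam * F s) (nhdsWithin 0 (Ioi 0)) (nhds L) := by
      have := (tendsto_const_nhds (x := L)).sub ((tendsto_const_nhds (x := lam)).mul hFtend)
      simpa using this
    apply h1.congr'
    filter_upwards [Ioc_mem_nhdsGT_of_mem (by simp : (0:ℝ) ∈ Ico (0:ℝ) 1)] with s hs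
    exact (hkey s hs.1 hs.2).symm
  -- prove L = 0
  have hL0 : L = 0 := by
    by_contra hL
    have hLpos : 0 < |L| := abs_pos.2 hL
    obtain ⟨M₀, hM₀⟩ := (isCompact_Icc (a := (0:ℝ)) (b := 1)).exists_bound_of_continuousOn
        (hcont.mono Icc_subset_Ici_self)
    set M : ℝ := max M₀ 1 with hMdef
    have hM : ∀ t ∈ Icc (0:ℝ) 1, |g t| ≤ M := fun t ht =>
      le_trans (by simpa only [Real.norm_eq_abs] using hM₀ t ht) (le_max_left _ _)
    have hM1 : (1:ℝ) ≤ M := le_max_right _ _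
    set B : ℝ := (Real.cosh (1/ρ) / ρ) ^ k with hBdef
    have hBpos : 0 < B := pow_pos (div_pos (Real.cosh_pos _) hρ) k
    have hPB : ∀ t ∈ Ioc (0:ℝ) 1, P t ≤ B * t := by
      intro t ht
      have h1 : Real.sinh (t/ρ) ≤ (t/ρ) * Real.cosh (1/ρ) :=
        OR_sinh_le (div_pos ht.1 hρ).le (by gcongr; exact ht.2)
      have h2 : P t ≤ ((t/ρ) * Real.cosh (1/ρ)) ^ k := by
        apply pow_le_pow_left₀ (Real.sinh_pos_iff.2 (div_pos ht.1 hρ)).le h1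
      have h3 : ((t/ρ) * Real.cosh (1/ρ)) ^ k = t ^ k * B := by
        rw [hBdef, ← mul_pow]; congr 1; ring
      have h4 : t ^ k ≤ t := by
        calc t ^ k ≤ t ^ 1 := pow_le_pow_of_le_one ht.1.le ht.2 hk
        _ = t := pow_one t
      calc P t ≤ t ^ k * B := by rw [← h3]; exact h2
      _ ≤ t * B := mul_le_mul_of_nonneg_right h4 hBpos.le
      _ = B * t := mul_comm _ _
    set ε : ℝ := min 1 (|L| / (2 * (|lam| * C + 1))) with hεdef
    have hεpos : 0 < ε := lt_min one_pos (div_pos hLpos (by positivity))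
    have hε1 : ε ≤ 1 := min_le_left _ _
    have hEbound : ∀ s ∈ Ioc (0:ℝ) ε, |lam * F s| ≤ |L| / 2 := by
      intro s hs
      have h1 : |lam * F s| ≤ |lam| * (C * s) := by
        rw [abs_mul]
        exact mul_le_mul_of_nonneg_left (hFbound s hs.1 (hs.2.trans hε1)) (abs_nonneg _)
      have h2 : s ≤ |L| / (2 * (|lam| * C + 1)) := hs.2.trans (min_le_right _ _)
      have h3 : 0 ≤ |lam| * C := mul_nonneg (abs_nonneg _) hCnonneg
      rw [le_div_iff₀ (by positivity)] at h2
      nlinarith [hs.1, abs_nonneg lam, mul_nonneg hs.1.le h3]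
    set T : ℝ := (4 * M + 4) * B / |L| with hTdef
    have hTpos : 0 < T := by positivity
    set δ : ℝ := ε * Real.exp (-T) with hδdef
    have hδpos : 0 < δ := by positivity
    have hδε : δ < ε := by
      have h1 : Real.exp (-T) < 1 := Real.exp_lt_one_iff.2 (by linarith)
      nlinarith [Real.exp_pos (-T)]
    have hIcc_sub : Icc δ ε ⊆ Ioi 0 := fun x hx => lt_of_lt_of_le hδpos hx.1
    have hg_ftc := integral_eq_sub_of_hasDerivAt (a := δ) (b := ε) (f := g)
        (f' := deriv g) ?_ ?_
    rotate_left
    · intro x hx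
      rw [uIcc_of_le hδε.le] at hx
      exact ((hdiff x (hIcc_sub hx)).1).hasDerivAt
    · apply ContinuousOn.intervalIntegrable
      rw [uIcc_of_le hδε.le]
      exact hdgcont.mono hIcc_sub
    set E : ℝ → ℝ := fun x => L - P x * deriv g x with hEdef
    have hEcont : ContinuousOn E (Icc δ ε) :=
      continuousOn_const.sub ((hPcont.continuousOn.mul (hdgcont.mono hIcc_sub)))
    have hPinv_cont : ContinuousOn (fun x => (P x)⁻¹) (Icc δ ε) :=
      hPcont.continuousOn.inv₀ (fun x hx => (hPpos x (hIcc_sub hx)).ne')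
    have hinteg : ∀ x ∈ uIcc δ ε, deriv g x = L * (P x)⁻¹ - E x * (P x)⁻¹ := by
      intro x hx
      rw [uIcc_of_le hδε.le] at hx
      have hPx : P x ≠ 0 := (hPpos x (hIcc_sub hx)).ne'
      rw [hEdef]
      field_simp
      ring
    have hint1 : IntervalIntegrable (fun x => L * (P x)⁻¹) MeasureTheory.volume δ ε := by
      apply ContinuousOn.intervalIntegrable
      rw [uIcc_of_le hδε.le]
      exact continuousOn_const.mul hPinv_cont
    have hint2 : IntervalIntegrable (fun x => E x * (P x)⁻¹) MeasureTheory.volume δ ε := by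
      apply ContinuousOn.intervalIntegrable
      rw [uIcc_of_le hδε.le]
      exact hEcont.mul hPinv_cont
    have hsplit : ∫ x in δ..ε, deriv g x
        = (∫ x in δ..ε, L * (P x)⁻¹) - ∫ x in δ..ε, E x * (P x)⁻¹ := by
      rw [← integral_sub hint1 hint2]
      exact integral_congr hinteg
    set I : ℝ := ∫ x in δ..ε, (P x)⁻¹ with hIdef
    set J : ℝ := ∫ x in δ..ε, E x * (P x)⁻¹ with hJdef
    have hPinv_int : IntervalIntegrable (fun x => (P x)⁻¹) MeasureTheory.volume δ ε := by
      apply ContinuousOn.intervalIntegrable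
      rw [uIcc_of_le hδε.le]
      exact hPinv_cont
    have hIL : (∫ x in δ..ε, L * (P x)⁻¹) = L * I := integral_const_mul _ _
    -- lower bound for I
    have hlog : Real.log ε - Real.log δ = T := by
      rw [hδdef, Real.log_mul hεpos.ne' (Real.exp_ne_zero _), Real.log_exp]
      ring
    have hBx_int : IntervalIntegrable (fun x => B⁻¹ * (1/x)) MeasureTheory.volume δ ε := by
      apply ContinuousOn.intervalIntegrable
      rw [uIcc_of_le hδε.le]
      exact continuousOn_const.mul
        ((continuousOn_const.div continuousOn_id) fun x hx => (hIcc_sub hx).ne')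
    have hIlow : B⁻¹ * T ≤ I := by
      have hmono := integral_mono_on hδε.le hBx_int hPinv_int (fun x hx => by
        have hx0 : 0 < x := hIcc_sub hx
        have hPBx : P x ≤ B * x := hPB x ⟨hx0, hx.2.trans hε1⟩
        have := inv_anti₀ (hPpos x hx0) hPBx
        calc B⁻¹ * (1/x) = (B * x)⁻¹ := by
              rw [mul_inv]; ring
        _ ≤ (P x)⁻¹ := this)
      calc B⁻¹ * T = B⁻¹ * (Real.log ε - Real.log δ) := by rw [hlog]
      _ = B⁻¹ * Real.log (ε/δ) := by rw [Real.log_div hεpos.ne' hδpos.ne']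
      _ = ∫ x in δ..ε, B⁻¹ * (1/x) := by
          rw [intervalIntegral.integral_const_mul, integral_one_div]
          rw [uIcc_of_le hδε.le]
          intro h0mem
          exact absurd h0mem.1 (not_le.2 hδpos)
      _ ≤ I := hmono
    have hInonneg : 0 ≤ I := le_trans (by positivity) hIlow
    -- bound for J
    have hJbound : |J| ≤ |L|/2 * I := by
      have h1 : |J| ≤ ∫ x in δ..ε, |E x * (P x)⁻¹| :=
        intervalIntegral.abs_integral_le_integral_abs hδε.le
      have h2 : (∫ x in δ..ε, |E x * (P x)⁻¹|) ≤ ∫ x in δ..ε, |L|/2 * (P x)⁻¹ := by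
        apply integral_mono_on hδε.le _ _ (fun x hx => ?_)
        · apply ContinuousOn.intervalIntegrable
          rw [uIcc_of_le hδε.le]
          exact (hEcont.mul hPinv_cont).abs
        · apply ContinuousOn.intervalIntegrable
          rw [uIcc_of_le hδε.le]
          exact continuousOn_const.mul hPinv_cont
        · have hx0 : 0 < x := hIcc_sub hx
          have hEx : E x = lam * F x := by
            have := hkey x hx0 (hx.2.trans hε1)
            show L - P x * deriv g x = lam * F x
            linarith
          have hEb : |E x| ≤ |L|/2 := by
            rw [hEx]; exact hEbound x ⟨hx0, hx.2⟩
          rw [abs_mul, abs_inv, abs_of_pos (hPpos x hx0)]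
          exact mul_le_mul_of_nonneg_right hEb (inv_nonneg.2 (hPpos x hx0).le)
      calc |J| ≤ ∫ x in δ..ε, |E x * (P x)⁻¹| := h1
      _ ≤ ∫ x in δ..ε, |L|/2 * (P x)⁻¹ := h2
      _ = |L|/2 * I := integral_const_mul _ _
    -- combine
    have hδ01 : δ ∈ Icc (0:ℝ) 1 := ⟨hδpos.le, hδε.le.trans hε1⟩
    have hε01 : ε ∈ Icc (0:ℝ) 1 := ⟨hεpos.le, hε1⟩
    have hgb : |g ε - g δ| ≤ 2 * M := by
      have := abs_sub (g ε) (g δ)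
      calc |g ε - g δ| ≤ |g ε| + |g δ| := abs_sub _ _
      _ ≤ M + M := add_le_add (hM ε hε01) (hM δ hδ01)
      _ = 2 * M := by ring
    have heq2 : g ε - g δ = L * I - J := by
      rw [← hg_ftc, hsplit, hIL]
    have hfin : |L|/2 * I ≤ 2 * M := by
      have h1 : |L| * I - |J| ≤ |L * I - J| := by
        calc |L| * I - |J| = |L * I| - |J| := by rw [abs_mul, abs_of_nonneg hInonneg]
        _ ≤ |L * I - J| := abs_sub_abs_le_abs_sub _ _
      have h2 : |L * I - J| ≤ 2 * M := by rw [← heq2]; exact hgb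
      linarith
    have hTI : |L|/2 * (B⁻¹ * T) = 2 * M + 2 := by
      rw [hTdef]
      field_simp
      ring
    nlinarith [mul_le_mul_of_nonneg_left hIlow (by positivity : (0:ℝ) ≤ |L|/2)]
  rw [hL0] at hTend
  exact hTend

lemma OR_pos (k : ℕ) (hk : 1 ≤ k) (ρ : ℝ) (hρ : 0 < ρ) (lam : ℝ)
    (hlam : lam ≤ (k:ℝ)^2/(4*ρ^2)) (g : ℝ → ℝ)
    (hcont : ContinuousOn g (Set.Ici 0))
    (hdiff : ∀ r : ℝ, 0 < r → DifferentiableAt ℝ g r ∧ DifferentiableAt ℝ (deriv g) r)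
    (heq : ∀ r : ℝ, 0 < r → deriv (deriv g) r
      + (k/ρ) * (Real.cosh (r/ρ)/Real.sinh (r/ρ)) * deriv g r + lam * g r = 0)
    (h0 : g 0 = 1) :
    ∀ r : ℝ, 0 ≤ r → 0 < g r := by
  set P : ℝ → ℝ := fun s => Real.sinh (s/ρ) ^ k with hPdef
  have hPcont : Continuous P := by fun_prop
  have hPpos : ∀ s : ℝ, 0 < s → 0 < P s := fun s hs =>
    pow_pos (Real.sinh_pos_iff.2 (div_pos hs hρ)) k
  have hP0 : P 0 = 0 := by
    simp only [hPdef, zero_div, Real.sinh_zero]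
    exact zero_pow (by omega)
  by_contra hcon
  push_neg at hcon
  obtain ⟨r₂, hr₂0, hr₂⟩ := hcon
  -- find the first zero
  have hgc2 : ContinuousOn g (Icc 0 r₂) := hcont.mono (Icc_subset_Ici_self)
  have hiv : (0:ℝ) ∈ Icc (g r₂) (g 0) := ⟨hr₂, by rw [h0]; exact zero_le_one⟩
  obtain ⟨r', hr'mem, hr'⟩ := intermediate_value_Icc' hr₂0 hgc2 hiv
  set Zs : Set ℝ := Icc 0 r₂ ∩ g ⁻¹' {0} with hZsdef
  have hZs_closed : IsClosed Zs := hgc2.preimage_isClosed_of_isClosed isClosed_Icc isClosed_singleton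
  have hZs_ne : Zs.Nonempty := ⟨r', hr'mem, by simpa using hr'⟩
  have hZs_bdd : BddBelow Zs := ⟨0, fun x hx => hx.1.1⟩
  set r₁ : ℝ := sInf Zs with hr₁def
  have hr₁mem : r₁ ∈ Zs := hZs_closed.csInf_mem hZs_ne hZs_bdd
  have hgr₁ : g r₁ = 0 := hr₁mem.2
  have hr₁pos : 0 < r₁ := by
    rcases hr₁mem.1.1.lt_or_eq with h | h
    · exact h
    · exfalso; rw [← h, h0] at hgr₁; norm_num at hgr₁
  have hbefore : ∀ x : ℝ, 0 ≤ x → x < r₁ → 0 < g x := by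
    intro x hx0 hxr
    by_contra hgx
    push_neg at hgx
    have hxr₂ : x ≤ r₂ := le_trans hxr.le hr₁mem.1.2
    obtain ⟨r'', hr''mem, hr''⟩ := intermediate_value_Icc' hx0
      (hcont.mono Icc_subset_Ici_self) ⟨hgx, by rw [h0]; exact zero_le_one⟩
    have : r₁ ≤ r'' := csInf_le hZs_bdd ⟨⟨hr''mem.1, hr''mem.2.trans hxr₂⟩, by simpa using hr''⟩
    linarith [hr''mem.2]
  -- the comparison function
  set w : ℝ → ℝ := fun s => Real.exp (-((k:ℝ)/(2*ρ)) * s) with hwdef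
  have hwpos : ∀ s, 0 < w s := fun s => Real.exp_pos _
  have hw : ∀ s : ℝ, HasDerivAt w (-((k:ℝ)/(2*ρ)) * w s) s := by
    intro s
    have h1 : HasDerivAt (fun u : ℝ => -((k:ℝ)/(2*ρ)) * u) (-((k:ℝ)/(2*ρ))) s := by
      simpa using (hasDerivAt_id s).const_mul (-((k:ℝ)/(2*ρ)))
    have h2 := (Real.hasDerivAt_exp (-((k:ℝ)/(2*ρ)) * s)).comp s h1
    have h4 : HasDerivAt w (Real.exp (-((k:ℝ)/(2*ρ)) * s) * (-((k:ℝ)/(2*ρ)))) s := h2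
    convert h4 using 1
    show -((k:ℝ)/(2*ρ)) * w s = _
    show -((k:ℝ)/(2*ρ)) * Real.exp (-((k:ℝ)/(2*ρ)) * s) = _
    ring
  set Zf : ℝ → ℝ := fun s => -((k:ℝ)/(2*ρ)) * ((P s * g s) * w s) - w s * (P s * deriv g s)
    with hZfdef
  set Zv : ℝ → ℝ := fun r => w r * g r * P r *
    (lam + (k:ℝ)^2/(4*ρ^2) - ((k:ℝ)^2/(2*ρ^2)) * (Real.cosh (r/ρ)/Real.sinh (r/ρ))) with hZvdef
  have hZderiv : ∀ r : ℝ, 0 < r → HasDerivAt Zf (Zv r) r := by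
    intro r hr
    have hS : 0 < Real.sinh (r/ρ) := Real.sinh_pos_iff.2 (div_pos hr hρ)
    have hA1 := OR_Pderiv_hasDeriv k hk ρ hρ lam g hdiff heq r hr
    have hA2 := (OR_P_hasDeriv k ρ hρ r).mul (hdiff r hr).1.hasDerivAt
    have hcomb := (((hA2.mul (hw r)).const_mul (-((k:ℝ)/(2*ρ)))).sub ((hw r).mul hA1))
    refine HasDerivAt.congr_deriv hcomb (Eq.symm ?_)
    rw [hZvdef]
    have hpow : Real.sinh (r/ρ) ^ k = Real.sinh (r/ρ) ^ (k-1) * Real.sinh (r/ρ) := by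
      rw [← pow_succ]; congr 1; omega
    show w r * g r * (Real.sinh (r/ρ) ^ k) *
        (lam + (k:ℝ)^2/(4*ρ^2) - ((k:ℝ)^2/(2*ρ^2)) * (Real.cosh (r/ρ)/Real.sinh (r/ρ))) = _
    simp only [Pi.mul_apply]
    rw [hpow]
    show _ = -((k:ℝ)/(2*ρ)) *
        (((k : ℝ) * Real.sinh (r/ρ) ^ (k-1) * Real.cosh (r/ρ) / ρ * g r
          + Real.sinh (r/ρ) ^ (k-1) * Real.sinh (r/ρ) * deriv g r) * w r
         + Real.sinh (r/ρ) ^ (k-1) * Real.sinh (r/ρ) * g r * (-((k:ℝ)/(2*ρ)) * w r))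
      - ((-((k:ℝ)/(2*ρ)) * w r) * (Real.sinh (r/ρ) ^ (k-1) * Real.sinh (r/ρ) * deriv g r)
         + w r * (-lam * (Real.sinh (r/ρ) ^ (k-1) * Real.sinh (r/ρ) * g r)))
    field_simp
    ring
  have hZv_neg : ∀ r, 0 < r → r < r₁ → Zv r < 0 := by
    intro r hr hrr₁
    have hS : 0 < Real.sinh (r/ρ) := Real.sinh_pos_iff.2 (div_pos hr hρ)
    have hC : Real.sinh (r/ρ) < Real.cosh (r/ρ) := by
      have := Real.cosh_sub_sinh (r/ρ)
      nlinarith [Real.exp_pos (-(r/ρ))]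
    have hq : 1 < Real.cosh (r/ρ) / Real.sinh (r/ρ) := (one_lt_div hS).2 hC
    have hk2 : 0 < (k:ℝ)^2/(2*ρ^2) := by
      have : (0:ℝ) < (k:ℝ) := by exact_mod_cast hk
      positivity
    have hbr : lam + (k:ℝ)^2/(4*ρ^2) - ((k:ℝ)^2/(2*ρ^2)) * (Real.cosh (r/ρ)/Real.sinh (r/ρ))
        < 0 := by
      have hAD : (k:ℝ)^2/(2*ρ^2) = 2 * ((k:ℝ)^2/(4*ρ^2)) := by ring
      linarith [mul_lt_mul_of_pos_left hq hk2]
    have hfac : 0 < w r * g r * P r :=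
      mul_pos (mul_pos (hwpos r) (hbefore r hr.le hrr₁)) (hPpos r hr)
    exact mul_neg_of_pos_of_neg hfac hbr
  have hZtend : Tendsto Zf (nhdsWithin 0 (Ioi 0)) (nhds 0) := by
    have h1 : Tendsto (fun s => P s * g s) (nhdsWithin 0 (Ioi 0)) (nhds 0) := by
      have hg0 : Tendsto g (nhdsWithin 0 (Ioi 0)) (nhds 1) := by
        have := (hcont 0 (self_mem_Ici)).tendsto
        rw [h0] at this
        exact this.mono_left (nhdsWithin_mono _ Ioi_subset_Ici_self)
      have hP0' : Tendsto P (nhdsWithin 0 (Ioi 0)) (nhds 0) := by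
        have := hPcont.tendsto 0
        rw [hP0] at this
        exact this.mono_left nhdsWithin_le_nhds
      simpa using hP0'.mul hg0
    have h2 := OR_tendsto k hk ρ hρ lam g hcont hdiff heq
    have hwt : Tendsto w (nhdsWithin 0 (Ioi 0)) (nhds 1) := by
      have : Tendsto w (nhds 0) (nhds (w 0)) := ((Real.continuous_exp).comp
        (continuous_const.mul continuous_id)).tendsto 0
      rw [show w 0 = 1 by simp [hwdef]] at this
      exact this.mono_left nhdsWithin_le_nhds
    have h4 : Tendsto Zf (nhdsWithin 0 (Ioi 0))
        (nhds (-((k:ℝ)/(2*ρ)) * (0*1) - 1*0)) := by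
      apply Tendsto.congr _ (((h1.mul hwt).const_mul (-((k:ℝ)/(2*ρ)))).sub (hwt.mul h2))
      intro x
      simp only [hZfdef, hPdef]
    simpa using h4
  have hZr₁ := OR_neg_of_deriv_neg hr₁pos
    (fun r hr => hZderiv r hr.1)
    (fun r hr => hZv_neg r hr.1 hr.2) hZtend
  -- but Z r₁ ≥ 0
  have hdg : deriv g r₁ ≤ 0 := by
    have hs := hasDerivAt_iff_tendsto_slope.1 (hdiff r₁ hr₁pos).1.hasDerivAt
    have hs' : Tendsto (slope g r₁) (nhdsWithin r₁ (Iio r₁)) (nhds (deriv g r₁)) :=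
      hs.mono_left (nhdsWithin_mono _ (fun x hx => ne_of_lt hx))
    apply le_of_tendsto hs'
    filter_upwards [Ioo_mem_nhdsLT_of_mem (⟨hr₁pos, le_refl r₁⟩ : r₁ ∈ Ioc 0 r₁)] with x hx
    rw [slope_def_field]
    apply div_nonpos_iff.2
    left
    constructor
    · have := hbefore x hx.1.le hx.2
      rw [hgr₁]; linarith
    · linarith [hx.2]
  have hZr₁' : Zf r₁ = w r₁ * P r₁ * (-(deriv g r₁)) := by
    show -((k:ℝ)/(2*ρ)) * ((P r₁ * g r₁) * w r₁) - w r₁ * (P r₁ * deriv g r₁) = _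
    rw [hgr₁]; ring
  rw [hZr₁'] at hZr₁
  nlinarith [mul_nonneg (mul_nonneg (hwpos r₁).le (hPpos r₁ hr₁pos).le) (neg_nonneg.2 hdg)]

lemma OR_compare (k : ℕ) (hk : 1 ≤ k) (ρ : ℝ) (hρ : 0 < ρ) (μ ν : ℝ) (hμν : μ < ν)
    (hμle : μ ≤ (k:ℝ)^2/(4*ρ^2)) (hνle : ν ≤ (k:ℝ)^2/(4*ρ^2)) (u v : ℝ → ℝ)
    (hucont : ContinuousOn u (Set.Ici 0)) (hvcont : ContinuousOn v (Set.Ici 0))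
    (hudiff : ∀ r : ℝ, 0 < r → DifferentiableAt ℝ u r ∧ DifferentiableAt ℝ (deriv u) r)
    (hvdiff : ∀ r : ℝ, 0 < r → DifferentiableAt ℝ v r ∧ DifferentiableAt ℝ (deriv v) r)
    (hueq : ∀ r : ℝ, 0 < r → deriv (deriv u) r
      + (k/ρ) * (Real.cosh (r/ρ)/Real.sinh (r/ρ)) * deriv u r + μ * u r = 0)
    (hveq : ∀ r : ℝ, 0 < r → deriv (deriv v) r
      + (k/ρ) * (Real.cosh (r/ρ)/Real.sinh (r/ρ)) * deriv v r + ν * v r = 0)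
    (hu0 : u 0 = 1) (hv0 : v 0 = 1) :
    ∀ r : ℝ, 0 < r → v r < u r := by
  set P : ℝ → ℝ := fun s => Real.sinh (s/ρ) ^ k with hPdef
  have hPpos : ∀ s : ℝ, 0 < s → 0 < P s := fun s hs =>
    pow_pos (Real.sinh_pos_iff.2 (div_pos hs hρ)) k
  have hupos := OR_pos k hk ρ hρ μ hμle u hucont hudiff hueq hu0
  have hvpos := OR_pos k hk ρ hρ ν hνle v hvcont hvdiff hveq hv0
  set W : ℝ → ℝ := fun s => (P s * deriv u s) * v s - (P s * deriv v s) * u s with hWdef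
  have hWderiv : ∀ r : ℝ, 0 < r →
      HasDerivAt W ((ν - μ) * (P r * (u r * v r))) r := by
    intro r hr
    have hA1u := OR_Pderiv_hasDeriv k hk ρ hρ μ u hudiff hueq r hr
    have hA1v := OR_Pderiv_hasDeriv k hk ρ hρ ν v hvdiff hveq r hr
    have hW := (hA1u.mul (hvdiff r hr).1.hasDerivAt).sub
      (hA1v.mul (hudiff r hr).1.hasDerivAt)
    refine HasDerivAt.congr_deriv hW (Eq.symm ?_)
    ring
  have hWtend : Tendsto W (nhdsWithin 0 (Ioi 0)) (nhds 0) := by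
    have hu1 : Tendsto u (nhdsWithin 0 (Ioi 0)) (nhds 1) := by
      have := (hucont 0 self_mem_Ici).tendsto
      rw [hu0] at this
      exact this.mono_left (nhdsWithin_mono _ Ioi_subset_Ici_self)
    have hv1 : Tendsto v (nhdsWithin 0 (Ioi 0)) (nhds 1) := by
      have := (hvcont 0 self_mem_Ici).tendsto
      rw [hv0] at this
      exact this.mono_left (nhdsWithin_mono _ Ioi_subset_Ici_self)
    have h1 := OR_tendsto k hk ρ hρ μ u hucont hudiff hueq
    have h2 := OR_tendsto k hk ρ hρ ν v hvcont hvdiff hveq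
    have h3 : Tendsto W (nhdsWithin 0 (Ioi 0)) (nhds (0 * 1 - 0 * 1)) := by
      apply Tendsto.congr _ ((h1.mul hv1).sub (h2.mul hu1))
      intro x
      simp only [hWdef, hPdef]
    simpa using h3
  have hWpos : ∀ b : ℝ, 0 < b → 0 < W b := by
    intro b hb
    have hneg := OR_neg_of_deriv_neg hb (Z := fun s => -W s)
      (Z' := fun r => -((ν - μ) * (P r * (u r * v r))))
      (fun r hr => (hWderiv r hr.1).neg)
      (fun r hr => by
        have h5 : 0 < (ν - μ) * (P r * (u r * v r)) := by
          apply mul_pos (by linarith)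
          exact mul_pos (hPpos r hr.1) (mul_pos (hupos r hr.1.le) (hvpos r hr.1.le))
        show -((ν - μ) * (P r * (u r * v r))) < 0
        linarith)
      (by simpa using hWtend.neg)
    simpa using hneg
  intro r hr
  have hmono : StrictMonoOn (fun x => u x / v x) (Icc 0 r) := by
    apply strictMonoOn_of_deriv_pos (convex_Icc 0 r)
    · exact ContinuousOn.div (hucont.mono Icc_subset_Ici_self)
        (hvcont.mono Icc_subset_Ici_self) (fun x hx => (hvpos x hx.1).ne')
    · intro x hx
      rw [interior_Icc] at hx
      have hvx : v x ≠ 0 := (hvpos x hx.1.le).ne'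
      have hdq := ((hudiff x hx.1).1.hasDerivAt.div (hvdiff x hx.1).1.hasDerivAt hvx)
      rw [HasDerivAt.deriv (f := fun x => u x / v x) hdq]
      apply div_pos _ (pow_pos (hvpos x hx.1.le) 2)
      have hWx : W x = P x * (deriv u x * v x - u x * deriv v x) := by
        show (P x * deriv u x) * v x - (P x * deriv v x) * u x = _
        ring
      have h1 : deriv u x * v x - u x * deriv v x = W x / P x := by
        rw [hWx, mul_div_cancel_left₀ _ (hPpos x hx.1).ne']
      rw [h1]
      exact div_pos (hWpos x hx.1) (hPpos x hx.1)
  have h2 := hmono (left_mem_Icc.2 hr.le) (right_mem_Icc.2 hr.le) hr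
  have h3 : (1:ℝ) < u r / v r := by
    simpa [hu0, hv0] using h2
  rw [lt_div_iff₀ (hvpos r hr.le)] at h3
  linarith

lemma OR_reduce (k : ℕ) (ρ : ℝ) (lam : ℝ) (φ : ℝ → ℂ)
    (hcont : ContinuousOn φ (Set.Ici 0))
    (hdiff : ∀ r : ℝ, 0 < r → DifferentiableAt ℝ φ r ∧ DifferentiableAt ℝ (deriv φ) r)
    (heqc : ∀ r : ℝ, 0 < r → deriv (deriv φ) r
      + ((k : ℂ) / (ρ : ℂ)) * ((Real.cosh (r / ρ) / Real.sinh (r / ρ) : ℝ) : ℂ) * deriv φ r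
      + (lam : ℂ) * φ r = 0)
    (h0 : φ 0 = 1) :
    ContinuousOn (fun r => (φ r).re) (Set.Ici 0)
    ∧ (∀ r : ℝ, 0 < r → DifferentiableAt ℝ (fun r => (φ r).re) r
        ∧ DifferentiableAt ℝ (deriv (fun r => (φ r).re)) r)
    ∧ (∀ r : ℝ, 0 < r → deriv (deriv (fun r => (φ r).re)) r
        + ((k:ℝ)/ρ) * (Real.cosh (r/ρ)/Real.sinh (r/ρ)) * deriv (fun r => (φ r).re) r
        + lam * (φ r).re = 0)
    ∧ (fun r => (φ r).re) 0 = 1 := by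
  set g : ℝ → ℝ := fun r => (φ r).re with hgdef
  have hd1 : ∀ r : ℝ, 0 < r → HasDerivAt g ((deriv φ r).re) r := fun r hr =>
    Complex.reCLM.hasFDerivAt.comp_hasDerivAt r (hdiff r hr).1.hasDerivAt
  have hdeq : ∀ r : ℝ, 0 < r → deriv g r = (deriv φ r).re := fun r hr => (hd1 r hr).deriv
  have hd2 : ∀ r : ℝ, 0 < r → HasDerivAt (fun s => (deriv φ s).re) ((deriv (deriv φ) r).re) r :=
    fun r hr => Complex.reCLM.hasFDerivAt.comp_hasDerivAt r (hdiff r hr).2.hasDerivAt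
  have hev : ∀ r : ℝ, 0 < r → deriv g =ᶠ[nhds r] (fun s => (deriv φ s).re) := by
    intro r hr
    filter_upwards [Ioi_mem_nhds hr] with x hx
    exact hdeq x hx
  have hdd : ∀ r : ℝ, 0 < r → deriv (deriv g) r = (deriv (deriv φ) r).re := by
    intro r hr
    rw [Filter.EventuallyEq.deriv_eq (hev r hr)]
    exact (hd2 r hr).deriv
  refine ⟨Complex.continuous_re.comp_continuousOn hcont, ?_, ?_, by simp [hgdef, h0]⟩
  · intro r hr
    refine ⟨(hd1 r hr).differentiableAt, ?_⟩
    have := (hd2 r hr).differentiableAt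
    exact (Filter.EventuallyEq.differentiableAt_iff (hev r hr)).2 this
  · intro r hr
    have h := congrArg Complex.re (heqc r hr)
    have hB : ((k : ℂ) / (ρ : ℂ)) * ((Real.cosh (r / ρ) / Real.sinh (r / ρ) : ℝ) : ℂ)
        = ((((k:ℝ)/ρ) * (Real.cosh (r/ρ)/Real.sinh (r/ρ)) : ℝ) : ℂ) := by
      push_cast
      ring
    rw [hB] at h
    simp only [Complex.add_re, Complex.re_ofReal_mul, Complex.zero_re] at h
    rw [hdd r hr, hdeq r hr]
    exact h

/-- Let `k ≥ 1`, `ρ > 0`, `κ = −1/ρ²`, and let `μ ≠ ν` be *real*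
eigenvalues with `μ, ν ≤ −κk²/4 = k²/(4ρ²)`.  If `φ_μ, φ_ν` are radial eigenfunctions
of the hyperbolic Laplacian (continuous on `[0,∞)`, twice differentiable on `(0,∞)`,
solving `φ'' + (k/ρ)·coth(r/ρ)·φ' + λφ = 0` on `(0,∞)`) with `φ_μ(0) = φ_ν(0) = 1`,
then `φ_μ(r) ≠ φ_ν(r)` for every `r > 0`; consequently, if the two eigenfunctions agree
at a single point `r₀ > 0`, then `μ = ν` and `φ_μ ≡ φ_ν` on `[0,∞)`. -/
theorem one_radius_theorem_real_eigenvalues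
    (k : ℕ) (hk : 1 ≤ k) (ρ : ℝ) (hρ : 0 < ρ)
    (μ ν : ℝ) (hμν : μ ≠ ν)
    (hμle : μ ≤ k ^ 2 / (4 * ρ ^ 2)) (hνle : ν ≤ k ^ 2 / (4 * ρ ^ 2))
    (φμ φν : ℝ → ℂ)
    (hμcont : ContinuousOn φμ (Set.Ici 0))
    (hνcont : ContinuousOn φν (Set.Ici 0))
    (hμdiff : ∀ r : ℝ, 0 < r → DifferentiableAt ℝ φμ r ∧ DifferentiableAt ℝ (deriv φμ) r)
    (hνdiff : ∀ r : ℝ, 0 < r → DifferentiableAt ℝ φν r ∧ DifferentiableAt ℝ (deriv φν) r)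
    (hμeq : ∀ r : ℝ, 0 < r →
      deriv (deriv φμ) r +
          ((k : ℂ) / (ρ : ℂ)) * ((Real.cosh (r / ρ) / Real.sinh (r / ρ) : ℝ) : ℂ) *
            deriv φμ r + (μ : ℂ) * φμ r = 0)
    (hνeq : ∀ r : ℝ, 0 < r →
      deriv (deriv φν) r +
          ((k : ℂ) / (ρ : ℂ)) * ((Real.cosh (r / ρ) / Real.sinh (r / ρ) : ℝ) : ℂ) *
            deriv φν r + (ν : ℂ) * φν r = 0)
    (hμ0 : φμ 0 = 1) (hν0 : φν 0 = 1) :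
    (∀ r : ℝ, 0 < r → φμ r ≠ φν r) ∧
      (∀ r₀ : ℝ, 0 < r₀ → φμ r₀ = φν r₀ → μ = ν ∧ ∀ r ∈ Set.Ici (0 : ℝ), φμ r = φν r) := by
  obtain ⟨hμc, hμd, hμe, hμz⟩ := OR_reduce k ρ μ φμ hμcont hμdiff hμeq hμ0
  obtain ⟨hνc, hνd, hνe, hνz⟩ := OR_reduce k ρ ν φν hνcont hνdiff hνeq hν0
  have hne : ∀ r : ℝ, 0 < r → φμ r ≠ φν r := by
    intro r hr hcontra
    have hre : (φμ r).re = (φν r).re := by rw [hcontra]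
    rcases lt_or_gt_of_ne hμν with h | h
    · have h1 := OR_compare k hk ρ hρ μ ν h hμle hνle
        (fun r => (φμ r).re) (fun r => (φν r).re) hμc hνc hμd hνd hμe hνe hμz hνz r hr
      have h2 : (φν r).re < (φμ r).re := h1
      linarith
    · have h1 := OR_compare k hk ρ hρ ν μ h hνle hμle
        (fun r => (φν r).re) (fun r => (φμ r).re) hνc hμc hνd hμd hνe hμe hνz hμz r hr
      have h2 : (φμ r).re < (φν r).re := h1
      linarith
  exact ⟨hne, fun r₀ hr₀ heq => absurd heq (hne r₀ hr₀)⟩
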